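/- Let G be the vertex-sum of t ≥ 2 cycles of length n ≥ 3 at a vertex. Then D(G) = min{ k : k^{n-1} - k^{⌈(n-1)/2⌉} ≥ 2t }. -/

import Mathlib

set_option maxHeartbeats 1000000


open Function

section Defs

universe u₁ u₂ u₃

variable {V : Type u₁} {W : Type u₂} {C : Type u₃}

/-- A coloring is distinguishing if only the identity automorphism preserves it. -/
def DistCol (G : SimpleGraph V) (c : V → C) : Prop :=
  ∀ φ : G ≃g G, (∀ x, c (φ x) = c x) → ∀ x, φ x = x

/-- The distinguishing number: the least number of colors admitting a distinguishing coloring. -/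
noncomputable def Dnum (G : SimpleGraph V) : ℕ :=
  sInf {k | ∃ c : V → Fin k, DistCol G c}

/-- The distinguishing threshold: the least `k` such that every `k`-coloring is distinguishing. -/
noncomputable def theta (G : SimpleGraph V) : ℕ :=
  sInf {k | ∀ c : V → Fin k, DistCol G c}

/-- The number of non-equivalent distinguishing colorings with at most `k` colors. -/
noncomputable def Phi (G : SimpleGraph V) (k : ℕ) : ℕ :=
  Nat.card (Quot fun c₁ c₂ : {c : V → Fin k // DistCol G c} =>
    ∃ φ : G ≃g G, ∀ x, c₁.1 x = c₂.1 (φ x))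

/-- Rooted version of distinguishing: only automorphisms fixing `v` are considered. -/
def DistColR (G : SimpleGraph V) (v : V) (c : V → C) : Prop :=
  ∀ φ : G ≃g G, φ v = v → (∀ x, c (φ x) = c x) → ∀ x, φ x = x

noncomputable def DnumR (G : SimpleGraph V) (v : V) : ℕ :=
  sInf {k | ∃ c : V → Fin k, DistColR G v c}

noncomputable def thetaR (G : SimpleGraph V) (v : V) : ℕ :=
  sInf {k | ∀ c : V → Fin k, DistColR G v c}

noncomputable def PhiR (G : SimpleGraph V) (v : V) (k : ℕ) : ℕ :=
  Nat.card (Quot fun c₁ c₂ : {c : V → Fin k // DistColR G v c} =>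
    ∃ φ : G ≃g G, φ v = v ∧ ∀ x, c₁.1 x = c₂.1 (φ x))

/-- A vertex `u` is steady if every automorphism of `G - u` extends to an
automorphism of `G` fixing `u`. -/
def Steady (G : SimpleGraph V) (u : V) : Prop :=
  ∀ ψ : G.induce {w : V | w ≠ u} ≃g G.induce {w : V | w ≠ u},
    ∃ φ : G ≃g G, φ u = u ∧ ∀ w : {w : V | w ≠ u}, φ ↑w = ↑(ψ w)

/-- The vertex-sum of the graphs `G i` (all containing the vertex `u`) at `u`:
`none` is the central vertex obtained by identifying the copies of `u`. -/
def VertexSum {t : ℕ} (G : Fin t → SimpleGraph V) (u : V) :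
    SimpleGraph (Option (Fin t × {w : V // w ≠ u})) where
  Adj x y :=
    (∃ i w, x = none ∧ y = some (i, w) ∧ (G i).Adj u w.1) ∨
    (∃ i w, y = none ∧ x = some (i, w) ∧ (G i).Adj u w.1) ∨
    (∃ i w z, x = some (i, w) ∧ y = some (i, z) ∧ (G i).Adj w.1 z.1)
  symm := by
    constructor
    rintro x y (⟨i, w, hx, hy, h⟩ | ⟨i, w, hy, hx, h⟩ | ⟨i, w, z, hx, hy, h⟩)
    · exact Or.inr (Or.inl ⟨i, w, hx, hy, h⟩)
    · exact Or.inl ⟨i, w, hy, hx, h⟩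
    · exact Or.inr (Or.inr ⟨i, z, w, hy, hx, h.symm⟩)
  loopless := by
    constructor
    rintro x (⟨i, w, hx, hy, h⟩ | ⟨i, w, hy, hx, h⟩ | ⟨i, w, z, hx, hy, h⟩)
    · rw [hx] at hy; exact (Option.some_ne_none _ hy.symm).elim
    · rw [hy] at hx; exact (Option.some_ne_none _ hx.symm).elim
    · rw [hx] at hy
      obtain rfl : w = z := by simpa using hy
      exact h.ne rfl

/-- Disjoint union of the graphs `H i`. -/
def SigmaUnion {t : ℕ} (H : Fin t → SimpleGraph W) : SimpleGraph (Fin t × W) where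
  Adj x y := x.1 = y.1 ∧ (H x.1).Adj x.2 y.2
  symm := by
    constructor
    rintro ⟨i, a⟩ ⟨j, b⟩ ⟨rfl, h⟩
    exact ⟨rfl, h.symm⟩
  loopless := by constructor; rintro x ⟨-, h⟩; exact h.ne rfl

/-- A graph is 2-connected if it has at least 3 vertices and no cut vertex. -/
def TwoConnected (G : SimpleGraph V) [Fintype V] : Prop :=
  3 ≤ Fintype.card V ∧ ∀ x : V, (G.induce {w : V | w ≠ x}).Connected

/-- The smooth rooted product `G_s(H)` where `H` is rooted at `v`. -/
def RootedProd (G : SimpleGraph V) (H : SimpleGraph W) (v : W) :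
    SimpleGraph (V × W) where
  Adj x y := (x.1 = y.1 ∧ H.Adj x.2 y.2) ∨ (x.2 = v ∧ y.2 = v ∧ G.Adj x.1 y.1)
  symm := by
    constructor
    rintro x y (⟨h1, h2⟩ | ⟨h1, h2, h3⟩)
    · exact Or.inl ⟨h1.symm, h2.symm⟩
    · exact Or.inr ⟨h2, h1, h3.symm⟩
  loopless := by constructor; rintro x (⟨-, h⟩ | ⟨-, -, h⟩) <;> exact h.ne rfl

/-- The corona product `G ⊙ H`: the vertex `(g, none)` is the vertex `g` of `G`,
and `(g, some h)` is the vertex `h` in the copy of `H` attached to `g`. -/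
def Corona (G : SimpleGraph V) (H : SimpleGraph W) :
    SimpleGraph (V × Option W) where
  Adj x y :=
    (x.2 = none ∧ y.2 = none ∧ G.Adj x.1 y.1) ∨
    (x.1 = y.1 ∧ ∃ a b, x.2 = some a ∧ y.2 = some b ∧ H.Adj a b) ∨
    (x.1 = y.1 ∧ x.2 = none ∧ ∃ a, y.2 = some a) ∨
    (x.1 = y.1 ∧ y.2 = none ∧ ∃ a, x.2 = some a)
  symm := by
    constructor
    rintro x y (⟨h1, h2, h3⟩ | ⟨h1, a, b, h2, h3, h4⟩ | ⟨h1, h2, h3⟩ | ⟨h1, h2, h3⟩)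
    · exact Or.inl ⟨h2, h1, h3.symm⟩
    · exact Or.inr (Or.inl ⟨h1.symm, b, a, h3, h2, h4.symm⟩)
    · exact Or.inr (Or.inr (Or.inr ⟨h1.symm, h2, h3⟩))
    · exact Or.inr (Or.inr (Or.inl ⟨h1.symm, h2, h3⟩))
  loopless := by
    constructor
    rintro x (⟨-, -, h⟩ | ⟨-, a, b, h2, h3, h4⟩ | ⟨-, h2, a, h3⟩ | ⟨-, h2, a, h3⟩)
    · exact h.ne rfl
    · rw [h2] at h3; exact h4.ne (Option.some.inj h3)
    · rw [h2] at h3; exact (Option.some_ne_none _ h3.symm).elim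
    · rw [h2] at h3; exact (Option.some_ne_none _ h3.symm).elim

/-- The lexicographic product `G ∘ H`. -/
def LexProd (G : SimpleGraph V) (H : SimpleGraph W) : SimpleGraph (V × W) where
  Adj x y := G.Adj x.1 y.1 ∨ (x.1 = y.1 ∧ H.Adj x.2 y.2)
  symm := by
    constructor
    rintro x y (h | ⟨h1, h2⟩)
    exacts [Or.inl h.symm, Or.inr ⟨h1.symm, h2.symm⟩]
  loopless := by constructor; rintro x (h | ⟨-, h⟩) <;> exact h.ne rfl

/-- The number of cycles (orbits, counting fixed points) of a permutation. -/
noncomputable def numCycles (e : Equiv.Perm V) : ℕ :=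
  Nat.card (Quot fun x y : V => ∃ n : ℤ, (e ^ n) x = y)

end Defs

attribute [local instance] Classical.propDecidable

set_option maxHeartbeats 1000000

attribute [local instance] Classical.propDecidable

namespace Aux
variable {t m k : ℕ}



/-- reversal of a sequence -/
abbrev rseq (a : Fin m → Fin k) : Fin m → Fin k := a ∘ Fin.rev

lemma rseq_rseq (a : Fin m → Fin k) : rseq (rseq a) = a := by
  funext j; simp [rseq, Fin.rev_rev]

/-- symmetric sequences are counted by k^⌈m/2⌉ -/
noncomputable def symEquiv (hm : 1 ≤ m) :
    {a : Fin m → Fin k // rseq a = a} ≃ (Fin ((m+1)/2) → Fin k) where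
  toFun a j := a.1 ⟨j.1, by omega⟩
  invFun b := ⟨fun j => b ⟨min j.1 (m - 1 - j.1), by omega⟩, by
    funext j
    refine congrArg b (Fin.ext ?_)
    simp only [Fin.val_rev]
    omega⟩
  left_inv := by
    rintro ⟨a, ha⟩
    apply Subtype.ext
    funext j
    simp only
    rcases le_or_gt j.1 (m - 1 - j.1) with h | h
    · exact congrArg a (Fin.ext (by simp; omega))
    · have := congrFun ha j
      simp only [rseq, Function.comp_apply] at this
      rw [← this]
      exact congrArg a (Fin.ext (by simp [Fin.val_rev]; omega))
  right_inv := by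
    intro b
    funext j
    exact congrArg b (Fin.ext (by simp; omega))

lemma card_sym (hm : 1 ≤ m) :
    Fintype.card {a : Fin m → Fin k // rseq a = a} = k ^ ((m+1)/2) := by
  rw [Fintype.card_congr (symEquiv hm)]
  simp

lemma card_good (hm : 1 ≤ m) :
    Fintype.card {a : Fin m → Fin k // rseq a ≠ a} = k ^ m - k ^ ((m+1)/2) := by
  rw [Fintype.card_subtype_compl, card_sym hm]
  simp



noncomputable def E : (Fin m → Fin k) → ℕ := fun a => (Fintype.equivFin (Fin m → Fin k) a : ℕ)

lemma E_inj : Function.Injective (E (m := m) (k := k)) := by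
  intro a b h
  have := (Fintype.equivFin (Fin m → Fin k)).injective (Fin.ext h)
  exact this

def IsRep (a : Fin m → Fin k) : Prop := rseq a ≠ a ∧ E a < E (rseq a)

lemma rep_total {a : Fin m → Fin k} (h : rseq a ≠ a) : IsRep a ∨ IsRep (rseq a) := by
  rcases lt_trichotomy (E a) (E (rseq a)) with h1 | h1 | h1
  · exact Or.inl ⟨h, h1⟩
  · exact absurd (E_inj h1) (Ne.symm h)
  · refine Or.inr ⟨?_, ?_⟩
    · rw [rseq_rseq]; exact fun hh => h hh.symm
    · rw [rseq_rseq]; exact h1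

lemma rep_not_both {a b : Fin m → Fin k} (ha : IsRep a) (hb : IsRep b) : a ≠ rseq b := by
  rintro rfl
  have h1 := ha.2
  have h2 := hb.2
  rw [rseq_rseq] at h1
  exact lt_asymm h1 h2

/-- injection from good sequences into reps × Bool -/
noncomputable def goodToRep :
    {a : Fin m → Fin k // rseq a ≠ a} → {a : Fin m → Fin k // IsRep a} × Bool :=
  fun a =>
    if h : IsRep a.1 then (⟨a.1, h⟩, false)
    else (⟨rseq a.1, ((rep_total a.2).resolve_left h)⟩, true)

lemma goodToRep_inj : Function.Injective (goodToRep (m := m) (k := k)) := by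
  rintro ⟨a, ha⟩ ⟨b, hb⟩ h
  unfold goodToRep at h
  split_ifs at h with h1 h2 h2 <;>
    simp only [Prod.mk.injEq, Subtype.mk.injEq] at h
  · exact Subtype.ext h.1
  · exact absurd h.2 (by simp)
  · exact absurd h.2 (by simp)
  · apply Subtype.ext
    have := congrArg rseq h.1
    rwa [rseq_rseq, rseq_rseq] at this

lemma card_rep_ge (t : ℕ) (h : 2 * t ≤ Fintype.card {a : Fin m → Fin k // rseq a ≠ a}) :
    t ≤ Fintype.card {a : Fin m → Fin k // IsRep a} := by
  have := Fintype.card_le_of_injective _ (goodToRep_inj (m := m) (k := k))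
  rw [Fintype.card_prod, Fintype.card_bool] at this
  omega



def Spider (t m : ℕ) : SimpleGraph (Option (Fin t × Fin m)) where
  Adj x y :=
    (∃ i a, x = none ∧ y = some (i, a) ∧ (a.1 = 0 ∨ a.1 + 1 = m)) ∨
    (∃ i a, y = none ∧ x = some (i, a) ∧ (a.1 = 0 ∨ a.1 + 1 = m)) ∨
    (∃ i a b, x = some (i, a) ∧ y = some (i, b) ∧ (a.1 + 1 = b.1 ∨ b.1 + 1 = a.1))
  symm := by
    constructor
    rintro x y (⟨i,a,hx,hy,h⟩|⟨i,a,hy,hx,h⟩|⟨i,a,b,hx,hy,h⟩)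
    · exact Or.inr (Or.inl ⟨i,a,hx,hy,h⟩)
    · exact Or.inl ⟨i,a,hy,hx,h⟩
    · exact Or.inr (Or.inr ⟨i,b,a,hy,hx,h.symm⟩)
  loopless := by
    constructor
    rintro x (⟨i,a,hx,hy,h⟩|⟨i,a,hy,hx,h⟩|⟨i,a,b,hx,hy,h⟩)
    · rw [hx] at hy; exact (Option.some_ne_none _ hy.symm).elim
    · rw [hy] at hx; exact (Option.some_ne_none _ hx.symm).elim
    · rw [hx] at hy
      obtain rfl : a = b := by simpa using hy
      omega


@[simp] lemma spider_adj_none_some {i : Fin t} {a : Fin m} :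
    (Spider t m).Adj none (some (i,a)) ↔ (a.1 = 0 ∨ a.1 + 1 = m) := by
  simp only [Spider]
  aesop

@[simp] lemma spider_adj_some_none {i : Fin t} {a : Fin m} :
    (Spider t m).Adj (some (i,a)) none ↔ (a.1 = 0 ∨ a.1 + 1 = m) := by
  simp only [Spider]
  aesop

@[simp] lemma spider_adj_some_some {i j : Fin t} {a b : Fin m} :
    (Spider t m).Adj (some (i,a)) (some (j,b)) ↔
      i = j ∧ (a.1 + 1 = b.1 ∨ b.1 + 1 = a.1) := by
  simp only [Spider]
  aesop

@[simp] lemma spider_not_adj_none_none :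
    ¬ (Spider t m).Adj (none : Option (Fin t × Fin m)) none := by
  simp only [Spider]
  aesop

lemma adj_some_cases {i : Fin t} {a : Fin m} {y} (h : (Spider t m).Adj (some (i,a)) y) :
    (y = none ∧ (a.1 = 0 ∨ a.1 + 1 = m)) ∨
    (∃ b : Fin m, y = some (i, b) ∧ (a.1 + 1 = b.1 ∨ b.1 + 1 = a.1)) := by
  match y with
  | none => exact Or.inl ⟨rfl, spider_adj_some_none.mp h⟩
  | some (j, b) =>
      obtain ⟨rfl, hp⟩ := spider_adj_some_some.mp h
      exact Or.inr ⟨b, rfl, hp⟩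

lemma rev_end_iff {a : Fin m} : ((a.rev).1 = 0 ∨ (a.rev).1 + 1 = m) ↔ (a.1 = 0 ∨ a.1 + 1 = m) := by
  have := a.2
  simp only [Fin.val_rev]
  omega

lemma rev_pair_iff {a b : Fin m} :
    ((a.rev).1 + 1 = (b.rev).1 ∨ (b.rev).1 + 1 = (a.rev).1) ↔ (a.1 + 1 = b.1 ∨ b.1 + 1 = a.1) := by
  have := a.2
  have := b.2
  simp only [Fin.val_rev]
  omega

/-- the wreath-type automorphisms of the spider -/
def wrEquiv (σ : Equiv.Perm (Fin t)) (ε : Fin t → Bool) :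
    Option (Fin t × Fin m) ≃ Option (Fin t × Fin m) where
  toFun := Option.map (fun p => (σ p.1, if ε p.1 then p.2.rev else p.2))
  invFun := Option.map (fun p => (σ.symm p.1, if ε (σ.symm p.1) then p.2.rev else p.2))
  left_inv := by
    rintro (_|⟨i,a⟩)
    · rfl
    · simp only [Option.map_some, Equiv.symm_apply_apply]
      cases h : ε i <;> simp [h, Fin.rev_rev]
  right_inv := by
    rintro (_|⟨i,a⟩)
    · rfl
    · simp only [Option.map_some, Equiv.apply_symm_apply]
      cases h : ε (σ.symm i) <;> simp [h, Fin.rev_rev]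

def wrIso (σ : Equiv.Perm (Fin t)) (ε : Fin t → Bool) : Spider t m ≃g Spider t m where
  toEquiv := wrEquiv σ ε
  map_rel_iff' := by
    rintro (_|⟨i,a⟩) (_|⟨j,b⟩)
    · simp [wrEquiv]
    · show (Spider t m).Adj none (some (σ j, _)) ↔ _
      rw [spider_adj_none_some, spider_adj_none_some]
      split_ifs
      · exact rev_end_iff
      · exact Iff.rfl
    · show (Spider t m).Adj (some (σ i, _)) none ↔ _
      rw [spider_adj_some_none, spider_adj_some_none]
      split_ifs
      · exact rev_end_iff
      · exact Iff.rfl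
    · show (Spider t m).Adj (some (σ i, _)) (some (σ j, _)) ↔ _
      rw [spider_adj_some_some, spider_adj_some_some]
      constructor
      · rintro ⟨hij, hp⟩
        obtain rfl := σ.injective hij
        refine ⟨rfl, ?_⟩
        revert hp
        split_ifs
        · exact rev_pair_iff.mp
        · exact id
      · rintro ⟨rfl, hp⟩
        refine ⟨rfl, ?_⟩
        split_ifs
        · exact rev_pair_iff.mpr hp
        · exact hp

@[simp] lemma wrIso_none (σ : Equiv.Perm (Fin t)) (ε : Fin t → Bool) :
    (wrIso (m := m) σ ε) none = none := rfl

@[simp] lemma wrIso_some (σ : Equiv.Perm (Fin t)) (ε : Fin t → Bool) (i : Fin t) (a : Fin m) :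
    (wrIso σ ε) (some (i, a)) = some (σ i, if ε i then a.rev else a) := rfl



lemma center_fix (hm : 2 ≤ m) (ht : 2 ≤ t) (φ : Spider t m ≃g Spider t m) :
    φ none = none := by
  cases hφ : φ none with
  | none => rfl
  | some p =>
    obtain ⟨q, aq⟩ := p
    set y₁ : Option (Fin t × Fin m) := some (⟨0, by omega⟩, ⟨0, by omega⟩) with hy₁
    set y₂ : Option (Fin t × Fin m) := some (⟨1, by omega⟩, ⟨0, by omega⟩) with hy₂
    set y₃ : Option (Fin t × Fin m) := some (⟨0, by omega⟩, ⟨m-1, by omega⟩) with hy₃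
    have hne12 : y₁ ≠ y₂ := by simp [hy₁, hy₂, Prod.ext_iff, Fin.ext_iff]; try omega
    have hne13 : y₁ ≠ y₃ := by simp [hy₁, hy₃, Prod.ext_iff, Fin.ext_iff]; try omega
    have hne23 : y₂ ≠ y₃ := by simp [hy₂, hy₃, Prod.ext_iff, Fin.ext_iff]; try omega
    have ha1 : (Spider t m).Adj none y₁ := by rw [hy₁, spider_adj_none_some]; left; rfl
    have ha2 : (Spider t m).Adj none y₂ := by rw [hy₂, spider_adj_none_some]; left; rfl
    have ha3 : (Spider t m).Adj none y₃ := by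
      rw [hy₃, spider_adj_none_some]; right; simp; omega
    have hb1 : (Spider t m).Adj (some (q, aq)) (φ y₁) := by
      rw [← hφ]; exact φ.map_rel_iff.mpr ha1
    have hb2 : (Spider t m).Adj (some (q, aq)) (φ y₂) := by
      rw [← hφ]; exact φ.map_rel_iff.mpr ha2
    have hb3 : (Spider t m).Adj (some (q, aq)) (φ y₃) := by
      rw [← hφ]; exact φ.map_rel_iff.mpr ha3
    have hne12' : φ y₁ ≠ φ y₂ := fun h => hne12 (φ.injective h)
    have hne13' : φ y₁ ≠ φ y₃ := fun h => hne13 (φ.injective h)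
    have hne23' : φ y₂ ≠ φ y₃ := fun h => hne23 (φ.injective h)
    have haq := aq.2
    rcases adj_some_cases hb1 with ⟨e1, c1⟩ | ⟨b1, e1, c1⟩ <;>
      rcases adj_some_cases hb2 with ⟨e2, c2⟩ | ⟨b2, e2, c2⟩ <;>
        rcases adj_some_cases hb3 with ⟨e3, c3⟩ | ⟨b3, e3, c3⟩
    · exact (hne12' (e1.trans e2.symm)).elim
    · exact (hne12' (e1.trans e2.symm)).elim
    · exact (hne13' (e1.trans e3.symm)).elim
    · -- y₁ ↦ none, y₂ ↦ some b2, y₃ ↦ some b3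
      have hb23 : b2 ≠ b3 := by
        intro h; exact hne23' (e2.trans (by rw [h, ← e3]))
      have : b2.1 ≠ b3.1 := fun h => hb23 (Fin.ext h)
      have := b2.2; have := b3.2
      omega
    · exact (hne23' (e2.trans e3.symm)).elim
    · -- y₁ ↦ some b1, y₂ ↦ none, y₃ ↦ some b3
      have hb13 : b1 ≠ b3 := by
        intro h; exact hne13' (e1.trans (by rw [h, ← e3]))
      have : b1.1 ≠ b3.1 := fun h => hb13 (Fin.ext h)
      have := b1.2; have := b3.2
      omega
    · -- y₁ ↦ some b1, y₂ ↦ some b2, y₃ ↦ none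
      have hb12 : b1 ≠ b2 := by
        intro h; exact hne12' (e1.trans (by rw [h, ← e2]))
      have : b1.1 ≠ b2.1 := fun h => hb12 (Fin.ext h)
      have := b1.2; have := b2.2
      omega
    · -- all some
      have hb12 : b1 ≠ b2 := by
        intro h; exact hne12' (e1.trans (by rw [h, ← e2]))
      have hb13 : b1 ≠ b3 := by
        intro h; exact hne13' (e1.trans (by rw [h, ← e3]))
      have hb23 : b2 ≠ b3 := by
        intro h; exact hne23' (e2.trans (by rw [h, ← e3]))
      have h12 : b1.1 ≠ b2.1 := fun h => hb12 (Fin.ext h)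
      have h13 : b1.1 ≠ b3.1 := fun h => hb13 (Fin.ext h)
      have h23 : b2.1 ≠ b3.1 := fun h => hb23 (Fin.ext h)
      have := b1.2; have := b2.2; have := b3.2
      omega

lemma walk (hm : 2 ≤ m) (φ : Spider t m ≃g Spider t m) (hc : φ none = none)
    (i p : Fin t) (h0 : φ (some (i, ⟨0, by omega⟩)) = some (p, ⟨0, by omega⟩)) :
    ∀ j : Fin m, φ (some (i, j)) = some (p, j) := by
  suffices h : ∀ J : ℕ, ∀ hJ : J < m, φ (some (i, ⟨J, hJ⟩)) = some (p, ⟨J, hJ⟩) by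
    intro j
    have := h j.1 j.2
    simpa [Fin.eta] using this
  intro J
  induction J using Nat.strong_induction_on with
  | _ J IH =>
    intro hJ
    match J, hJ with
    | 0, hJ => exact h0
    | (J+1), hJ =>
      have hJm : J < m := by omega
      have hIH : φ (some (i, ⟨J, hJm⟩)) = some (p, ⟨J, hJm⟩) := IH J (by omega) hJm
      have hadj : (Spider t m).Adj (some (i, ⟨J, hJm⟩)) (some (i, ⟨J+1, hJ⟩)) := by
        rw [spider_adj_some_some]; exact ⟨rfl, Or.inl rfl⟩
      have h2 : (Spider t m).Adj (some (p, ⟨J, hJm⟩)) (φ (some (i, ⟨J+1, hJ⟩))) := by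
        rw [← hIH]; exact φ.map_rel_iff.mpr hadj
      rcases adj_some_cases h2 with ⟨hy, _⟩ | ⟨b, hy, hb⟩
      · exact absurd (φ.injective (hy.trans hc.symm)) (by simp)
      · rcases hb with hb | hb
        · rw [hy]
          congr 2
          exact Fin.ext hb.symm
        · -- b.1 + 1 = J, so b = J - 1
          have hb' : b.1 + 1 = J := hb
          have hbm := b.2
          have hJ1 : 1 ≤ J := by omega
          have hIH2 : φ (some (i, ⟨J-1, by omega⟩)) = some (p, ⟨J-1, by omega⟩) :=
            IH (J-1) (by omega) (by omega)
          have hbe : some (p, b) = (some (p, ⟨J-1, by omega⟩) : Option (Fin t × Fin m)) := by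
            congr 2
            exact Fin.ext (show b.1 = J - 1 by omega)
          have h5 := φ.injective (hy.trans (hbe.trans hIH2.symm))
          simp only [Option.some.injEq, Prod.mk.injEq, Fin.mk.injEq] at h5
          omega

lemma classify (hm : 2 ≤ m) (φ : Spider t m ≃g Spider t m) (hc : φ none = none)
    (i : Fin t) :
    ∃ p, (∀ j, φ (some (i, j)) = some (p, j)) ∨ (∀ j, φ (some (i, j)) = some (p, j.rev)) := by
  have hadj0 : (Spider t m).Adj none (some (i, ⟨0, by omega⟩)) := by
    rw [spider_adj_none_some]; left; rfl
  have h2 : (Spider t m).Adj none (φ (some (i, ⟨0, by omega⟩))) := by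
    rw [← hc]; exact φ.map_rel_iff.mpr hadj0
  cases hq : φ (some (i, ⟨0, by omega⟩)) with
  | none => exact absurd (φ.injective (hq.trans hc.symm)) (by simp)
  | some q =>
    obtain ⟨p, a⟩ := q
    rw [hq, spider_adj_none_some] at h2
    rcases h2 with h2 | h2
    · -- a = 0 : identity type
      refine ⟨p, Or.inl (walk hm φ hc i p ?_)⟩
      rw [hq]
      congr 2
      exact Fin.ext h2
    · -- a = m - 1 : reversal type
      set ψ : Spider t m ≃g Spider t m := wrIso (Equiv.refl _) (fun x => decide (x = p)) with hψ
      have hψnone : ψ none = none := rfl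
      set φ' : Spider t m ≃g Spider t m := φ.trans ψ with hφ'
      have hφ'none : φ' none = none := by
        show ψ (φ none) = none
        rw [hc]; rfl
      have hφ'0 : φ' (some (i, ⟨0, by omega⟩)) = some (p, ⟨0, by omega⟩) := by
        show ψ (φ (some (i, ⟨0, by omega⟩))) = _
        rw [hq, hψ, wrIso_some]
        simp only [Equiv.refl_apply, decide_eq_true_eq, if_pos rfl, decide_true, if_true]
        congr 2
        exact Fin.ext (by simp [Fin.val_rev]; omega)
      have hwalk := walk hm φ' hφ'none i p hφ'0
      refine ⟨p, Or.inr (fun j => ?_)⟩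
      have h3 : ψ (φ (some (i, j))) = some (p, j) := hwalk j
      apply ψ.injective
      rw [h3, hψ, wrIso_some]
      simp [Fin.rev_rev]


theorem spider_core (ht : 2 ≤ t) (hm : 2 ≤ m) (k : ℕ) :
    (∃ c : Option (Fin t × Fin m) → Fin k, DistCol (Spider t m) c) ↔
      2 * t ≤ k ^ m - k ^ ((m + 1) / 2) := by
  constructor
  · rintro ⟨c, hc⟩
    set a : Fin t → (Fin m → Fin k) := fun i j => c (some (i, j)) with ha
    have hgood : ∀ i, rseq (a i) ≠ a i := by
      intro i h
      set ψ : Spider t m ≃g Spider t m := wrIso (Equiv.refl _) (fun x => decide (x = i)) with hψ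
      have hpres : ∀ x, c (ψ x) = c x := by
        rintro (_ | ⟨j, b⟩)
        · rfl
        · rw [hψ, wrIso_some]
          simp only [Equiv.refl_apply]
          by_cases hji : j = i
          · subst hji
            simp only [decide_true, if_true]
            exact congrFun h b
          · simp [hji]
      have h0 := hc ψ hpres (some (i, ⟨0, by omega⟩))
      rw [hψ, wrIso_some] at h0
      simp only [Equiv.refl_apply, decide_true, if_true, Option.some.injEq,
        Prod.mk.injEq, true_and] at h0
      have := congrArg Fin.val h0
      rw [Fin.val_rev] at this
      simp at this
      omega
    have hpair : ∀ i i', i ≠ i' → a i' ≠ a i ∧ a i' ≠ rseq (a i) := by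
      intro i i' hii
      constructor
      · intro h
        set ψ : Spider t m ≃g Spider t m := wrIso (Equiv.swap i i') (fun _ => false) with hψ
        have hpres : ∀ x, c (ψ x) = c x := by
          rintro (_ | ⟨j, b⟩)
          · rfl
          · rw [hψ, wrIso_some]
            simp only [if_neg Bool.false_ne_true]
            by_cases hji : j = i
            · subst hji
              rw [Equiv.swap_apply_left]
              exact congrFun h b
            · by_cases hji' : j = i'
              · subst hji'
                rw [Equiv.swap_apply_right]
                exact (congrFun h b).symm
              · rw [Equiv.swap_apply_of_ne_of_ne hji hji']
        have h0 := hc ψ hpres (some (i, ⟨0, by omega⟩))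
        rw [hψ, wrIso_some] at h0
        simp only [if_neg Bool.false_ne_true, Equiv.swap_apply_left, Option.some.injEq,
          Prod.mk.injEq] at h0
        exact hii h0.1.symm
      · intro h
        set ψ : Spider t m ≃g Spider t m :=
          wrIso (Equiv.swap i i') (fun x => decide (x = i) || decide (x = i')) with hψ
        have hpres : ∀ x, c (ψ x) = c x := by
          rintro (_ | ⟨j, b⟩)
          · rfl
          · rw [hψ, wrIso_some]
            by_cases hji : j = i
            · subst hji
              rw [Equiv.swap_apply_left]
              simp only [decide_true, Bool.true_or, if_true]
              have h2 : a i' b.rev = a j b := by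
                rw [h]
                show a j (b.rev.rev) = a j b
                rw [Fin.rev_rev]
              exact h2
            · by_cases hji' : j = i'
              · subst hji'
                rw [Equiv.swap_apply_right]
                simp only [decide_true, Bool.or_true, if_true]
                exact (congrFun h b).symm
              · rw [Equiv.swap_apply_of_ne_of_ne hji hji']
                simp [hji, hji']
        have h0 := hc ψ hpres (some (i, ⟨0, by omega⟩))
        rw [hψ, wrIso_some] at h0
        simp only [Equiv.swap_apply_left, Option.some.injEq, Prod.mk.injEq] at h0
        exact hii h0.1.symm
    -- build the injection
    classical
    set F : Fin t × Bool → {x : Fin m → Fin k // rseq x ≠ x} :=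
      fun p => if p.2 then ⟨rseq (a p.1), by rw [rseq_rseq]; exact (hgood p.1).symm⟩
        else ⟨a p.1, hgood p.1⟩ with hF
    have hFinj : Function.Injective F := by
      rintro ⟨i, bi⟩ ⟨j, bj⟩ h
      rw [hF] at h
      cases bi <;> cases bj <;>
        simp only [if_true, if_false, Bool.false_eq_true, Subtype.mk.injEq] at h
      · by_cases hij : i = j
        · rw [hij]
        · exact absurd h.symm (hpair i j hij).1
      · by_cases hij : i = j
        · subst hij; exact absurd h.symm (hgood i)
        · exact absurd h (hpair j i (Ne.symm hij)).2
      · by_cases hij : i = j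
        · subst hij; exact absurd h (hgood i)
        · exact absurd h.symm (hpair i j hij).2
      · by_cases hij : i = j
        · rw [hij]
        · have := congrArg rseq h
          rw [rseq_rseq, rseq_rseq] at this
          exact absurd this.symm (hpair i j hij).1
    have hcard := Fintype.card_le_of_injective F hFinj
    rw [Fintype.card_prod, Fintype.card_fin, Fintype.card_bool,
      card_good (by omega)] at hcard
    omega
  · intro h
    have hk : 0 < k := by
      rcases Nat.eq_zero_or_pos k with rfl | hk
      · rw [Nat.zero_pow (by omega), Nat.zero_pow (by omega)] at h
        omega
      · exact hk
    have hcard : 2 * t ≤ Fintype.card {x : Fin m → Fin k // rseq x ≠ x} := by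
      rw [card_good (by omega)]; exact h
    obtain ⟨f⟩ := Function.Embedding.nonempty_of_card_le
      (α := Fin t) (β := {x : Fin m → Fin k // IsRep x})
      (by rw [Fintype.card_fin]; exact card_rep_ge t hcard)
    refine ⟨fun x => match x with
      | none => ⟨0, hk⟩
      | some (i, j) => (f i).1 j, ?_⟩
    intro φ hpres
    have hcn := center_fix hm ht φ
    have key : ∀ i (j : Fin m), φ (some (i, j)) = some (i, j) := by
      intro i
      obtain ⟨p, hcase | hcase⟩ := classify hm φ hcn i
      · have hfe : (f p).1 = (f i).1 := by
          funext j
          have h1 := hpres (some (i, j))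
          rw [hcase j] at h1
          exact h1
        have hpi : p = i := f.injective (Subtype.ext hfe)
        subst hpi
        exact hcase
      · have hfe : rseq ((f p).1) = (f i).1 := by
          funext j
          have h1 := hpres (some (i, j))
          rw [hcase j] at h1
          exact h1
        by_cases hpi : p = i
        · subst hpi
          exact absurd hfe (f p).2.1
        · exact absurd hfe.symm (rep_not_both (f i).2 (f p).2)
    rintro (_ | ⟨i, j⟩)
    · exact hcn
    · exact key i j

-- depends on: Spider etc. (namespace Aux), VertexSum, DistCol at top level

/-- transfer of distinguishing colorings along an isomorphism -/
lemma distCol_exists_dir {V W : Type*} {G : SimpleGraph V} {H : SimpleGraph W}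
    (e : G ≃g H) (k : ℕ) :
    (∃ c : V → Fin k, DistCol G c) → (∃ c : W → Fin k, DistCol H c) := by
  rintro ⟨c, hc⟩
  refine ⟨c ∘ e.symm, ?_⟩
  intro ψ hψ x
  set φ : G ≃g G := (e.trans ψ).trans e.symm with hφ
  have hpres : ∀ y, c (φ y) = c y := by
    intro y
    have h1 := hψ (e y)
    show c (e.symm (ψ (e y))) = c y
    calc c (e.symm (ψ (e y))) = (c ∘ e.symm) (ψ (e y)) := rfl
      _ = (c ∘ e.symm) (e y) := h1
      _ = c (e.symm (e y)) := rfl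
      _ = c y := by rw [RelIso.symm_apply_apply]
  have h2 := hc φ hpres (e.symm x)
  have h3 : e.symm (ψ (e (e.symm x))) = e.symm x := h2
  rw [RelIso.apply_symm_apply] at h3
  exact e.symm.injective h3

lemma distCol_exists_iff {V W : Type*} {G : SimpleGraph V} {H : SimpleGraph W}
    (e : G ≃g H) (k : ℕ) :
    (∃ c : V → Fin k, DistCol G c) ↔ (∃ c : W → Fin k, DistCol H c) :=
  ⟨distCol_exists_dir e k, distCol_exists_dir e.symm k⟩

/- ### arithmetic for the cycle -/

def cdval (n : ℕ) (u w : Fin n) : ℕ := (n - u.1 + w.1) % n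

lemma cdval_lt (hn : 0 < n) (u w : Fin n) : cdval n u w < n := Nat.mod_lt _ hn

lemma cdval_eq_ite {n : ℕ} (u w : Fin n) :
    cdval n u w = if u.1 ≤ w.1 then w.1 - u.1 else n - u.1 + w.1 := by
  have hu := u.2; have hw := w.2
  unfold cdval
  rcases le_or_gt u.1 w.1 with h | h
  · rw [if_pos h, show n - u.1 + w.1 = (w.1 - u.1) + n by omega,
      Nat.add_mod_right, Nat.mod_eq_of_lt (by omega)]
  · rw [if_neg (by omega), Nat.mod_eq_of_lt (by omega)]

lemma cdval_sub {n : ℕ} (u w : Fin n) : (w - u).1 = cdval n u w := by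
  rw [Fin.sub_def]; rfl

lemma cdval_ne_zero {n : ℕ} (hn : 0 < n) (u w : Fin n) (h : w ≠ u) : cdval n u w ≠ 0 := by
  have hv : w.1 ≠ u.1 := fun hh => h (Fin.ext hh)
  have hu := u.2; have hw := w.2
  rw [cdval_eq_ite]
  split_ifs <;> omega

lemma adj_u_iff {n : ℕ} (hn : 3 ≤ n) (u w : Fin n) (h : w ≠ u) :
    (SimpleGraph.cycleGraph n).Adj u w ↔ (cdval n u w = 1 ∨ cdval n u w = n - 1) := by
  rw [SimpleGraph.cycleGraph_adj', cdval_sub, cdval_sub]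
  have hv : w.1 ≠ u.1 := fun hh => h (Fin.ext hh)
  have hu := u.2; have hw := w.2
  rw [cdval_eq_ite, cdval_eq_ite]
  split_ifs <;> omega

lemma adj_ww_iff {n : ℕ} (hn : 3 ≤ n) (u w z : Fin n) (hw : w ≠ u) (hz : z ≠ u) :
    (SimpleGraph.cycleGraph n).Adj w z ↔
      (cdval n u w = cdval n u z + 1 ∨ cdval n u z = cdval n u w + 1) := by
  rw [SimpleGraph.cycleGraph_adj', cdval_sub, cdval_sub]
  have hvw : w.1 ≠ u.1 := fun hh => hw (Fin.ext hh)
  have hvz : z.1 ≠ u.1 := fun hh => hz (Fin.ext hh)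
  have hu := u.2; have hw2 := w.2; have hz2 := z.2
  rw [cdval_eq_ite, cdval_eq_ite, cdval_eq_ite, cdval_eq_ite]
  split_ifs <;> omega

/- ### the equivalence of vertex sets -/

def pathIdx {n : ℕ} (hn : 3 ≤ n) (u : Fin n) (w : {w : Fin n // w ≠ u}) : Fin (n-1) :=
  ⟨cdval n u w.1 - 1, by
    have h1 := cdval_lt (n := n) (by omega) u w.1
    have h2 := cdval_ne_zero (by omega) u w.1 w.2
    omega⟩

def pathIdxInv {n : ℕ} (hn : 3 ≤ n) (u : Fin n) (a : Fin (n-1)) : {w : Fin n // w ≠ u} :=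
  ⟨⟨(u.1 + a.1 + 1) % n, Nat.mod_lt _ (by omega)⟩, by
    intro hh
    have hv := congrArg Fin.val hh
    simp only at hv
    have ha := a.2; have hu := u.2
    rcases Nat.lt_or_ge (u.1 + a.1 + 1) n with h | h
    · rw [Nat.mod_eq_of_lt h] at hv; omega
    · rw [Nat.mod_eq_sub_mod h, Nat.mod_eq_of_lt (by omega)] at hv; omega⟩

lemma cdval_pathIdxInv {n : ℕ} (hn : 3 ≤ n) (u : Fin n) (a : Fin (n-1)) :
    cdval n u (pathIdxInv hn u a).1 = a.1 + 1 := by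
  have ha := a.2; have hu := u.2
  show (n - u.1 + (u.1 + a.1 + 1) % n) % n = a.1 + 1
  rw [Nat.add_mod_mod, show n - u.1 + (u.1 + a.1 + 1) = (a.1 + 1) + n by omega,
    Nat.add_mod_right, Nat.mod_eq_of_lt (by omega)]

lemma pathIdx_left_inv {n : ℕ} (hn : 3 ≤ n) (u : Fin n) (w : {w : Fin n // w ≠ u}) :
    pathIdxInv hn u (pathIdx hn u w) = w := by
  apply Subtype.ext
  apply Fin.ext
  show (u.1 + (cdval n u w.1 - 1) + 1) % n = w.1.1
  have h1 := cdval_lt (n := n) (by omega) u w.1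
  have h2 := cdval_ne_zero (by omega) u w.1 w.2
  have hu := u.2; have hw := w.1.2
  rw [show u.1 + (cdval n u w.1 - 1) + 1 = u.1 + cdval n u w.1 by omega, cdval_eq_ite]
  rcases le_or_gt u.1 w.1.1 with h | h
  · rw [if_pos h, show u.1 + (w.1.1 - u.1) = w.1.1 by omega, Nat.mod_eq_of_lt hw]
  · rw [if_neg (by omega), show u.1 + (n - u.1 + w.1.1) = w.1.1 + n by omega,
      Nat.add_mod_right, Nat.mod_eq_of_lt hw]

lemma pathIdx_right_inv {n : ℕ} (hn : 3 ≤ n) (u : Fin n) (a : Fin (n-1)) :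
    pathIdx hn u (pathIdxInv hn u a) = a := by
  apply Fin.ext
  show cdval n u (pathIdxInv hn u a).1 - 1 = a.1
  rw [cdval_pathIdxInv hn u a]
  omega

def pathEquiv {n : ℕ} (hn : 3 ≤ n) (u : Fin n) : {w : Fin n // w ≠ u} ≃ Fin (n-1) where
  toFun := pathIdx hn u
  invFun := pathIdxInv hn u
  left_inv := pathIdx_left_inv hn u
  right_inv := pathIdx_right_inv hn u


/- ### adjacency lemmas for VertexSum, and the isomorphism -/

lemma vs_adj_none_some {V : Type*} {t : ℕ} {G : Fin t → SimpleGraph V} {u : V}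
    {i : Fin t} {w : {w : V // w ≠ u}} :
    (VertexSum G u).Adj none (some (i, w)) ↔ (G i).Adj u w.1 := by
  simp only [VertexSum]
  aesop

lemma vs_adj_some_none {V : Type*} {t : ℕ} {G : Fin t → SimpleGraph V} {u : V}
    {i : Fin t} {w : {w : V // w ≠ u}} :
    (VertexSum G u).Adj (some (i, w)) none ↔ (G i).Adj u w.1 := by
  simp only [VertexSum]
  aesop

lemma vs_adj_some_some {V : Type*} {t : ℕ} {G : Fin t → SimpleGraph V} {u : V}
    {i j : Fin t} {w z : {w : V // w ≠ u}} :
    (VertexSum G u).Adj (some (i, w)) (some (j, z)) ↔ i = j ∧ (G i).Adj w.1 z.1 := by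
  simp only [VertexSum]
  aesop

lemma vs_not_adj_none_none {V : Type*} {t : ℕ} {G : Fin t → SimpleGraph V} {u : V} :
    ¬ (VertexSum G u).Adj none none := by
  simp only [VertexSum]
  aesop

def bigIso (n t : ℕ) (hn : 3 ≤ n) (u : Fin n) :
    (VertexSum (fun _ : Fin t => SimpleGraph.cycleGraph n) u) ≃g Spider t (n-1) where
  toEquiv := Equiv.optionCongr (Equiv.prodCongr (Equiv.refl (Fin t)) (pathEquiv hn u))
  map_rel_iff' := by
    rintro (_|⟨i,w⟩) (_|⟨j,z⟩)
    · show (Spider t (n-1)).Adj none none ↔ _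
      simp only [spider_not_adj_none_none, vs_not_adj_none_none]
    · show (Spider t (n-1)).Adj none (some (j, pathEquiv hn u z)) ↔ _
      rw [spider_adj_none_some, vs_adj_none_some, adj_u_iff hn u z.1 z.2]
      have h1 := cdval_lt (n := n) (by omega) u z.1
      have h2 := cdval_ne_zero (n := n) (by omega) u z.1 z.2
      show (cdval n u z.1 - 1 = 0 ∨ cdval n u z.1 - 1 + 1 = n - 1) ↔ _
      omega
    · show (Spider t (n-1)).Adj (some (i, pathEquiv hn u w)) none ↔ _
      rw [spider_adj_some_none, vs_adj_some_none, adj_u_iff hn u w.1 w.2]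
      have h1 := cdval_lt (n := n) (by omega) u w.1
      have h2 := cdval_ne_zero (n := n) (by omega) u w.1 w.2
      show (cdval n u w.1 - 1 = 0 ∨ cdval n u w.1 - 1 + 1 = n - 1) ↔ _
      omega
    · show (Spider t (n-1)).Adj (some (i, pathEquiv hn u w)) (some (j, pathEquiv hn u z)) ↔ _
      rw [spider_adj_some_some, vs_adj_some_some, adj_ww_iff hn u w.1 z.1 w.2 z.2]
      have h1 := cdval_lt (n := n) (by omega) u w.1
      have h2 := cdval_ne_zero (n := n) (by omega) u w.1 w.2
      have h3 := cdval_lt (n := n) (by omega) u z.1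
      have h4 := cdval_ne_zero (n := n) (by omega) u z.1 z.2
      show (i = j ∧ (cdval n u w.1 - 1 + 1 = cdval n u z.1 - 1 ∨
          cdval n u z.1 - 1 + 1 = cdval n u w.1 - 1)) ↔ _
      constructor
      · rintro ⟨rfl, hp⟩; exact ⟨rfl, by omega⟩
      · rintro ⟨rfl, hp⟩; exact ⟨rfl, by omega⟩

end Aux

/-- the distinguishing number of the vertex-sum of `t ≥ 2` cycles of length
`n ≥ 3` at a vertex is `min { k : k^(n-1) - k^⌈(n-1)/2⌉ ≥ 2t }`. -/
theorem stmt9 (n t : ℕ) (hn : 3 ≤ n) (ht : 2 ≤ t) (u : Fin n) :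
    Dnum (VertexSum (fun _ : Fin t => SimpleGraph.cycleGraph n) u) =
      sInf {k | 2 * t ≤ k ^ (n - 1) - k ^ ((n - 1 + 1) / 2)} := by
  unfold Dnum
  apply congrArg sInf
  ext k
  simp only [Set.mem_setOf_eq]
  rw [Aux.distCol_exists_iff (Aux.bigIso n t hn u) k]
  exact Aux.spider_core ht (by omega) k
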